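/- Let m ∈ ℕ, m ≥ 1. Then for every integer n ≥ 0, ∫_0^∞ x^n e^{−x^{1+1/m}} dx ≤ D · Π_{j=1}^{⌊n·m/(m+1)⌋} ( n + 1 − j(1 + 1/m) ), where D = max_{l=0,…,m} ∫_0^∞ x^{l − ⌊l·m/(m+1)⌋·(m+1)/m} e^{−x^{1+1/m}} dx is a finite constant independent of n. -/

import Mathlib

open MeasureTheory ProbabilityTheory Filter
open scoped BigOperators Nat Real

/-- Non-normalised Hermite polynomial `H n x = (-1)^n e^{x²/2} (d/dx)^n e^{-x²/2}`. -/
noncomputable def H (n : ℕ) (x : ℝ) : ℝ :=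
  (-1 : ℝ) ^ n * Real.exp (x ^ 2 / 2) * (deriv^[n] fun y : ℝ => Real.exp (-(y ^ 2) / 2)) x

/-- Characteristic function of a random variable `Y` under `P`. -/
noncomputable def charFn {Ω : Type*} [MeasurableSpace Ω] (P : Measure Ω) (Y : Ω → ℝ)
    (s : ℝ) : ℂ :=
  ∫ ω, Complex.exp (Complex.I * s * Y ω) ∂P

/-- Cumulant of order `k`: `γ_k = i^{-k} [d^k/ds^k log v_Y(s)]_{s=0}`. -/
noncomputable def cumulant {Ω : Type*} [MeasurableSpace Ω] (P : Measure Ω) (Y : Ω → ℝ)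
    (k : ℕ) : ℂ :=
  iteratedDeriv k (fun s : ℝ => Complex.log (charFn P Y s)) 0 / Complex.I ^ k

/-- `V_Y = √(E Y²)`. -/
noncomputable def Vr {Ω : Type*} [MeasurableSpace Ω] (P : Measure Ω) (Y : Ω → ℝ) : ℝ :=
  Real.sqrt (∫ ω, (Y ω) ^ 2 ∂P)

/-- Nonnegative integer solutions of `k₁ + 2k₂ + ⋯ + ν k_ν = ν`. -/
def sols (ν : ℕ) : Finset (Fin ν → ℕ) :=
  (Fintype.piFinset fun _ => Finset.range (ν + 1)).filter fun k => ∑ i, (i.1 + 1) * k i = ν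

/-- Edgeworth correction term `Q_ν^Y`. -/
noncomputable def Q {Ω : Type*} [MeasurableSpace Ω] (P : Measure Ω) (Y : Ω → ℝ)
    (ν : ℕ) (x : ℝ) : ℝ :=
  -(Real.sqrt (2 * Real.pi))⁻¹ * Real.exp (-(x ^ 2) / 2) *
    ∑ k ∈ sols ν, H (ν + 2 * (∑ j, k j) - 1) x *
      ∏ m : Fin ν, (1 / (Nat.factorial (k m) : ℝ)) *
        ((cumulant P Y (m.1 + 3)).re /
          ((Nat.factorial (m.1 + 3) : ℝ) * (Vr P Y) ^ (m.1 + 3))) ^ (k m)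

/-- A Lévy process: starts at 0, has stationary and independent increments, and is
stochastically continuous. -/
structure IsLevyProcess {Ω : Type*} [MeasurableSpace Ω] (P : Measure Ω)
    (X : ℝ → Ω → ℝ) : Prop where
  meas : ∀ t, Measurable (X t)
  init : ∀ᵐ ω ∂P, X 0 ω = 0
  stat : ∀ s t : ℝ, 0 ≤ s → 0 ≤ t →
    IdentDistrib (fun ω => X (s + t) ω - X s ω) (X t) P P
  indep : ∀ (n : ℕ) (t : Fin (n + 1) → ℝ), (∀ i, 0 ≤ t i) → Monotone t →
    iIndepFun
      (fun i : Fin n => fun ω => X (t i.succ) ω - X (t i.castSucc) ω) P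
  stochCont : ∀ t : ℝ, 0 ≤ t → ∀ ε : ℝ, 0 < ε →
    Tendsto (fun s => P {ω | ε < |X s ω - X t ω|}) (nhds t) (nhds 0)

/-- Standard normal cumulative distribution function. -/
noncomputable def Phi (x : ℝ) : ℝ :=
  ∫ y in Set.Iic x, (Real.sqrt (2 * Real.pi))⁻¹ * Real.exp (-(y ^ 2) / 2)

/-- Cramér's condition: `limsup_{|s|→∞} |v_Y(s)| < 1`. -/
def CramerCond {Ω : Type*} [MeasurableSpace Ω] (P : Measure Ω) (Y : Ω → ℝ) : Prop :=
  limsup (fun s => ‖charFn P Y s‖) (cocompact ℝ) < 1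

/-- `X` has Lévy–Khinchine characteristic triplet `(σ², ρ, μ)`. -/
def HasLevyTriplet {Ω : Type*} [MeasurableSpace Ω] (P : Measure Ω) (X : ℝ → Ω → ℝ)
    (σ2 ρ : ℝ) (μ : Measure ℝ) : Prop :=
  μ {0} = 0 ∧ (∫⁻ x, ENNReal.ofReal (min (x ^ 2) 1) ∂μ) < ⊤ ∧
    ∀ t : ℝ, 0 ≤ t → ∀ s : ℝ,
      charFn P (X t) s =
        Complex.exp ((t : ℂ) * (-(σ2 * s ^ 2 : ℝ) / 2 + Complex.I * ρ * s +
          ∫ x, (Complex.exp (Complex.I * s * x) - 1 -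
            Complex.I * s * x * ({y : ℝ | |y| ≤ 1}.indicator (fun _ => (1 : ℂ)) x)) ∂μ))

/-- The Lévy measure is concentrated on a bounded interval. -/
def BddLevyMeasure (μ : Measure ℝ) : Prop :=
  ∃ R : ℝ, μ {x | R < |x|} = 0

lemma gammaProd (K : ℕ) : ∀ s : ℝ, 0 < s - K →
    Real.Gamma s = (∏ j ∈ Finset.Icc 1 K, (s - j)) * Real.Gamma (s - K) := by
  induction K with
  | zero => intro s _; simp
  | succ K ih =>
      intro s hs
      have hK : 0 < s - K := by push_cast at hs ⊢; linarith
      rw [ih s hK, Finset.prod_Icc_succ_top (by omega)]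
      have h1 : Real.Gamma (s - K) = (s - (K+1)) * Real.Gamma (s - (K+1)) := by
        have := Real.Gamma_add_one (s := s - (K+1)) (by push_cast at hs ⊢; intro h; rw [h] at hs; linarith)
        have he : s - (K+1) + 1 = s - K := by push_cast; ring
        rw [he] at this
        rw [this]
      rw [h1]
      push_cast
      ring

lemma key (p : ℝ) (hp : 0 < p) (K : ℕ) (a : ℝ) (hKp : (K : ℝ) * p ≤ a) (ha : 0 ≤ a) :
    ∫ x in Set.Ioi (0:ℝ), x ^ a * Real.exp (-(x ^ p)) =
      (∏ j ∈ Finset.Icc 1 K, ((a + 1 - j * p) / p)) *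
        ∫ x in Set.Ioi (0:ℝ), x ^ (a - K * p) * Real.exp (-(x ^ p)) := by
  have h1 : (-1 : ℝ) < a := by linarith
  have h2 : (-1 : ℝ) < a - K * p := by
    have : (0:ℝ) ≤ (K:ℝ) * p := by positivity
    linarith
  rw [integral_rpow_mul_exp_neg_rpow hp h1, integral_rpow_mul_exp_neg_rpow hp h2]
  have hG : Real.Gamma ((a + 1) / p) =
      (∏ j ∈ Finset.Icc 1 K, ((a + 1) / p - j)) * Real.Gamma ((a + 1) / p - K) := by
    apply gammaProd
    rw [sub_pos, lt_div_iff₀ hp]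
    linarith
  rw [hG]
  have he : (a - K * p + 1) / p = (a + 1) / p - K := by field_simp; ring
  rw [he]
  rw [show (∏ j ∈ Finset.Icc 1 K, ((a + 1 - j * p) / p)) =
      (∏ j ∈ Finset.Icc 1 K, ((a + 1) / p - j)) from
    Finset.prod_congr rfl fun j _ => by field_simp]
  ring

theorem integral_pow_mul_exp_bound (m : ℕ) (hm : 1 ≤ m) (n : ℕ) :
    ∫ x in Set.Ioi (0 : ℝ), x ^ n * Real.exp (-(x ^ ((1 : ℝ) + 1 / m))) ≤
      ((Finset.range (m + 1)).sup' ⟨0, Finset.mem_range.2 (Nat.succ_pos m)⟩ fun l =>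
          ∫ x in Set.Ioi (0 : ℝ),
            x ^ ((l : ℝ) - ((l * m / (m + 1) : ℕ) : ℝ) * (((m : ℝ) + 1) / m)) *
              Real.exp (-(x ^ ((1 : ℝ) + 1 / m)))) *
        ∏ j ∈ Finset.Icc 1 (n * m / (m + 1)),
          ((n : ℝ) + 1 - (j : ℝ) * (1 + 1 / (m : ℝ))) := by
  have hm0 : (0:ℝ) < m := by exact_mod_cast hm
  set p : ℝ := 1 + 1/(m:ℝ) with hpdef
  have hpeq : p = ((m:ℝ)+1)/m := by rw [hpdef]; field_simp
  have hp0 : (0:ℝ) < p := by rw [hpeq]; positivity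
  have hp1 : (1:ℝ) ≤ p := by
    rw [hpdef]; have : (0:ℝ) ≤ 1/(m:ℝ) := by positivity
    linarith
  set K := n * m / (m+1) with hKdef
  set q := n / (m+1) with hq
  set r := n % (m+1) with hr
  set Kr := r * m / (m+1) with hKrdef
  have hn : n = q * (m+1) + r := by rw [hq, hr]; rw [Nat.mul_comm]; exact (Nat.div_add_mod n (m+1)).symm
  have hKsplit : K = Kr + q * m := by
    rw [hKdef, hKrdef, hn]
    have h1 : (q * (m+1) + r) * m = r * m + (q * m) * (m + 1) := by ring
    rw [h1, Nat.add_mul_div_right _ _ (Nat.succ_pos m)]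
  have hKle : K * (m+1) ≤ n * m := Nat.div_mul_le_self _ _
  have hKrle : Kr * (m+1) ≤ r * m := Nat.div_mul_le_self _ _
  have hKp : (K:ℝ) * p ≤ n := by
    rw [hpeq, mul_div_assoc', div_le_iff₀ hm0]
    exact_mod_cast hKle
  have hKrp : (Kr:ℝ) * p ≤ r := by
    rw [hpeq, mul_div_assoc', div_le_iff₀ hm0]
    exact_mod_cast hKrle
  have hnreal : (n:ℝ) = q*(m+1)+r := by exact_mod_cast congrArg Nat.cast hn
  have hKreal : (K:ℝ) = Kr + q*m := by exact_mod_cast congrArg Nat.cast hKsplit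
  have hres : (n:ℝ) - K*p = (r:ℝ) - Kr*p := by
    rw [hnreal, hKreal, hpdef]; field_simp; ring
  have hkey := key p hp0 K (n:ℝ) hKp (Nat.cast_nonneg n)
  have hL : (∫ x in Set.Ioi (0:ℝ), x ^ n * Real.exp (-(x ^ p))) =
      ∫ x in Set.Ioi (0:ℝ), x ^ (n:ℝ) * Real.exp (-(x ^ p)) := by
    refine setIntegral_congr_fun measurableSet_Ioi fun x hx => ?_
    rw [Real.rpow_natCast]
  rw [hL, hkey, hres]
  set D := ((Finset.range (m + 1)).sup' ⟨0, Finset.mem_range.2 (Nat.succ_pos m)⟩ fun l =>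
      ∫ x in Set.Ioi (0 : ℝ),
        x ^ ((l : ℝ) - ((l * m / (m + 1) : ℕ) : ℝ) * (((m : ℝ) + 1) / m)) *
          Real.exp (-(x ^ p))) with hD
  have hrmem : r ∈ Finset.range (m+1) := Finset.mem_range.2 (Nat.mod_lt n (Nat.succ_pos m))
  have hID : (∫ x in Set.Ioi (0:ℝ), x ^ ((r:ℝ) - Kr*p) * Real.exp (-(x ^ p))) ≤ D := by
    have h := Finset.le_sup' (f := fun l : ℕ =>
      ∫ x in Set.Ioi (0 : ℝ),
        x ^ ((l : ℝ) - ((l * m / (m + 1) : ℕ) : ℝ) * (((m : ℝ) + 1) / m)) *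
          Real.exp (-(x ^ p))) hrmem
    rw [hD]
    refine (le_of_eq ?_).trans h
    rw [hpeq, hKrdef]
  have hInn : (0:ℝ) ≤ ∫ x in Set.Ioi (0:ℝ), x ^ ((r:ℝ) - Kr*p) * Real.exp (-(x ^ p)) := by
    apply setIntegral_nonneg measurableSet_Ioi
    intro x hx
    have hx0 : (0:ℝ) < x := hx
    positivity
  have hD0 : (0:ℝ) ≤ D := le_trans hInn hID
  set P := ∏ j ∈ Finset.Icc 1 K, ((n:ℝ) + 1 - (j:ℝ) * p) with hP
  have hP0 : (0:ℝ) ≤ P := by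
    apply Finset.prod_nonneg
    intro j hj
    have hjK : j ≤ K := (Finset.mem_Icc.1 hj).2
    have : (j:ℝ) * p ≤ (K:ℝ) * p := by
      apply mul_le_mul_of_nonneg_right _ hp0.le
      exact_mod_cast hjK
    linarith
  have hC : (∏ j ∈ Finset.Icc 1 K, (((n:ℝ) + 1 - (j:ℝ) * p) / p)) = P / p ^ K := by
    rw [hP, Finset.prod_div_distrib, Finset.prod_const, Nat.card_Icc]
    simp
  rw [hC]
  have hCP : P / p ^ K ≤ P := by
    apply div_le_self hP0
    exact one_le_pow₀ hp1
  calc P / p ^ K * ∫ x in Set.Ioi (0:ℝ), x ^ ((r:ℝ) - Kr*p) * Real.exp (-(x ^ p))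
      ≤ P / p ^ K * D := by
        apply mul_le_mul_of_nonneg_left hID
        positivity
    _ ≤ P * D := mul_le_mul_of_nonneg_right hCP hD0
    _ = D * P := mul_comm _ _
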